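/- Let c ∈ ℂ and P_c(w) = w² + c. If the orbit (P_c^{∘n}(0)) of the critical point 0 is unbounded (i.e. c lies outside the Mandelbrot set), then the filled Julia set K_c = {z ∈ ℂ : (P_c^{∘n}(z)) is bounded} is totally disconnected as a topological subspace of ℂ. -/

import Mathlib

open Complex Metric Set Filter Bornology

namespace Stmt18

noncomputable section

variable (c : ℂ)

def fc : ℂ → ℂ := fun w => w ^ 2 + c

def Rr : ℝ := ‖c‖ + 3

def KK : Set ℂ := {z : ℂ | IsBounded (Set.range fun n : ℕ => (fc c)^[n] z)}

def VV (j : ℕ) : Set ℂ := {z : ℂ | ‖(fc c)^[j] z‖ < Rr c}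

variable {c}

lemma Rr_pos : 0 < Rr c := by
  have := norm_nonneg c; unfold Rr; linarith

lemma continuous_fc_iter (j : ℕ) : Continuous ((fc c)^[j]) := by
  apply Continuous.iterate
  unfold fc; continuity

lemma grow {z : ℂ} (hz : ‖c‖ + 2 ≤ ‖z‖) : ‖z‖ + 1 ≤ ‖fc c z‖ := by
  have h0 := norm_nonneg c
  have hz' : ‖z ^ 2‖ - ‖-c‖ ≤ ‖z ^ 2 - -c‖ := norm_sub_norm_le _ _
  have h1 : fc c z = z ^ 2 - -c := by unfold fc; ring
  rw [h1]
  have h2 : ‖z ^ 2‖ = ‖z‖ ^ 2 := norm_pow z 2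
  have h3 : ‖-c‖ = ‖c‖ := norm_neg c
  nlinarith [norm_nonneg z]

lemma iter_grow {z : ℂ} (hz : Rr c ≤ ‖z‖) :
    ∀ j : ℕ, Rr c + j ≤ ‖(fc c)^[j] z‖ := by
  intro j
  induction j with
  | zero => simpa using hz
  | succ n ih =>
      rw [Function.iterate_succ_apply']
      have h1 : ‖c‖ + 2 ≤ ‖(fc c)^[n] z‖ := by
        have : ‖c‖ + 2 ≤ Rr c + n := by unfold Rr; linarith [Nat.cast_nonneg (α := ℝ) n]
        linarith
      have := grow h1
      push_cast
      linarith

lemma escape_of_big {z : ℂ} {n₀ : ℕ} (hz : Rr c ≤ ‖(fc c)^[n₀] z‖) :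
    ∀ n, n₀ ≤ n → Rr c ≤ ‖(fc c)^[n] z‖ := by
  intro n hn
  obtain ⟨j, rfl⟩ := Nat.exists_eq_add_of_le hn
  rw [Nat.add_comm, Function.iterate_add_apply]
  have := iter_grow hz j
  have hj : (0:ℝ) ≤ j := Nat.cast_nonneg j
  linarith

lemma mem_KK_iff {z : ℂ} : z ∈ KK c ↔ ∀ n : ℕ, ‖(fc c)^[n] z‖ < Rr c := by
  constructor
  · intro hz n
    by_contra hb
    push_neg at hb
    rw [KK, mem_setOf_eq, isBounded_iff_forall_norm_le] at hz
    obtain ⟨C, hC⟩ := hz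
    obtain ⟨j, hj⟩ := exists_nat_gt (C - Rr c)
    have h1 := iter_grow hb j
    have h2 := hC ((fc c)^[j + n] z) ⟨j + n, rfl⟩
    rw [Function.iterate_add_apply] at h2
    linarith
  · intro hz
    rw [KK, mem_setOf_eq, isBounded_iff_forall_norm_le]
    exact ⟨Rr c, by rintro x ⟨n, rfl⟩; exact (hz n).le⟩

lemma mem_KK_of_frequently {z : ℂ}
    (hz : ∀ N : ℕ, ∃ n, N ≤ n ∧ ‖(fc c)^[n] z‖ < Rr c) : z ∈ KK c := by
  rw [mem_KK_iff]
  intro n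
  by_contra hb
  push_neg at hb
  obtain ⟨n', hn', hlt⟩ := hz n
  exact absurd (escape_of_big hb n' hn') (by linarith)

lemma KK_subset_VV {z : ℂ} (hz : z ∈ KK c) (j : ℕ) : z ∈ VV c j := (mem_KK_iff.mp hz) j

lemma fc_mem_KK {z : ℂ} (hz : z ∈ KK c) : fc c z ∈ KK c := by
  rw [mem_KK_iff] at hz ⊢
  intro n
  rw [← Function.iterate_succ_apply]
  exact hz (n+1)

lemma iter_mem_KK {z : ℂ} (hz : z ∈ KK c) (n : ℕ) : (fc c)^[n] z ∈ KK c := by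
  induction n with
  | zero => simpa using hz
  | succ k ih => rw [Function.iterate_succ_apply']; exact fc_mem_KK ih

lemma isOpen_VV (j : ℕ) : IsOpen (VV c j) := by
  have : VV c j = (fun z => ‖(fc c)^[j] z‖) ⁻¹' (Iio (Rr c)) := rfl
  rw [this]
  exact isOpen_Iio.preimage ((continuous_fc_iter j).norm)

lemma VV_subset_ball (j : ℕ) : VV c j ⊆ ball (0:ℂ) (Rr c) := by
  intro z hz
  rw [mem_ball, dist_zero_right]
  by_contra hb
  push_neg at hb
  have h0 : Rr c ≤ ‖(fc c)^[0] z‖ := by simpa using hb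
  have := escape_of_big h0 j (Nat.zero_le j)
  have hzj : ‖(fc c)^[j] z‖ < Rr c := hz
  linarith

lemma VV_succ_subset (j : ℕ) : VV c (j+1) ⊆ VV c j := by
  intro z hz
  simp only [VV, mem_setOf_eq] at hz ⊢
  by_contra hb
  push_neg at hb
  have := escape_of_big hb (j+1) (Nat.le_succ j)
  linarith

lemma VV_mono {j k : ℕ} (hjk : j ≤ k) : VV c k ⊆ VV c j := by
  induction k with
  | zero => rw [Nat.le_zero.mp hjk]
  | succ n ih =>
      rcases Nat.lt_or_ge j (n+1) with hlt | hge
      · exact subset_trans (VV_succ_subset n) (ih (Nat.lt_succ_iff.mp hlt))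
      · rw [Nat.le_antisymm hjk hge]

lemma mem_VV_succ_iff {z : ℂ} {j : ℕ} : z ∈ VV c (j+1) ↔ fc c z ∈ VV c j := by
  simp only [VV, mem_setOf_eq, Function.iterate_succ_apply]

lemma isClosed_KK : IsClosed (KK c) := by
  have : KK c = ⋂ n : ℕ, {z : ℂ | ‖(fc c)^[n] z‖ ≤ Rr c} := by
    ext z
    simp only [mem_iInter, mem_setOf_eq]
    constructor
    · intro hz n; exact ((mem_KK_iff.mp hz) n).le
    · intro hz
      apply mem_KK_of_frequently
      intro N
      refine ⟨N, le_refl N, ?_⟩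
      by_contra hb
      push_neg at hb
      have h1 : ‖c‖ + 2 ≤ ‖(fc c)^[N] z‖ := by unfold Rr at hb; linarith
      have := grow h1
      have h2 := hz (N + 1)
      rw [Function.iterate_succ_apply'] at h2
      unfold Rr at hb h2
      linarith
  rw [this]
  exact isClosed_iInter fun n => isClosed_le ((continuous_fc_iter n).norm) continuous_const


-- ===== Module 2 =====


/-- Two continuous logarithm lifts over `Icc 0 1` of the same non-vanishing function
have the same endpoint gap. -/
lemma lift_gap_eq {μ ν : ℝ → ℂ} (hμ : ContinuousOn μ (Icc 0 1))
    (hν : ContinuousOn ν (Icc 0 1))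
    (hexp : ∀ t ∈ Icc (0:ℝ) 1, Complex.exp (μ t) = Complex.exp (ν t)) :
    μ 1 - μ 0 = ν 1 - ν 0 := by
  set h : ℝ → ℂ := fun t => μ t - ν t with hh
  have hint : ∀ t ∈ Icc (0:ℝ) 1, ∃ n : ℤ, h t = n * (2 * Real.pi * Complex.I) := by
    intro t ht
    have : Complex.exp (h t) = 1 := by
      rw [hh]
      simp only
      rw [Complex.exp_sub, hexp t ht, div_self (Complex.exp_ne_zero _)]
    rwa [Complex.exp_eq_one_iff] at this
  have hhc : ContinuousOn h (Icc 0 1) := hμ.sub hν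
  -- consider the imaginary part divided by 2π
  set ψ : ℝ → ℝ := fun t => (h t).im / (2 * Real.pi) with hψ
  have hπ : (0:ℝ) < 2 * Real.pi := by positivity
  have hψc : ContinuousOn ψ (Icc 0 1) :=
    (Complex.continuous_im.comp_continuousOn hhc).div_const _
  have hψint : ∀ t ∈ Icc (0:ℝ) 1, ∃ n : ℤ, ψ t = n := by
    intro t ht
    obtain ⟨n, hn⟩ := hint t ht
    refine ⟨n, ?_⟩
    rw [hψ]
    simp only
    rw [hn]
    have : ((n : ℂ) * (2 * Real.pi * Complex.I)).im = n * (2 * Real.pi) := by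
      simp [Complex.mul_im]
    rw [this]
    field_simp
  -- ψ 0 = ψ 1 by IVT-discreteness
  have h01 : (0:ℝ) ∈ Icc (0:ℝ) 1 := by norm_num
  have h11 : (1:ℝ) ∈ Icc (0:ℝ) 1 := by norm_num
  obtain ⟨n₀, hn₀⟩ := hψint 0 h01
  obtain ⟨n₁, hn₁⟩ := hψint 1 h11
  have hψeq : ψ 0 = ψ 1 := by
    by_contra hne
    have hn01 : n₀ ≠ n₁ := by
      intro hEq; apply hne; rw [hn₀, hn₁, hEq]
    -- pick non-integer value between
    have hIVT := intermediate_value_uIcc (a := (0:ℝ)) (b := 1) (f := ψ)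
      (hψc.mono (by rw [uIcc_of_le]; norm_num))
    rcases lt_or_gt_of_ne hn01 with hlt | hgt
    · have hy : (n₀ : ℝ) + 1/2 ∈ uIcc (ψ 0) (ψ 1) := by
        rw [hn₀, hn₁, uIcc_of_le (by exact_mod_cast hlt.le)]
        constructor
        · linarith
        · have : (n₀ : ℝ) + 1 ≤ n₁ := by exact_mod_cast hlt
          linarith
      obtain ⟨t, ht, hψt⟩ := hIVT hy
      obtain ⟨n, hn⟩ := hψint t (by rw [uIcc_of_le (by norm_num : (0:ℝ) ≤ 1)] at ht; exact ht)
      rw [hn] at hψt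
      have : (2:ℝ) * n = 2 * n₀ + 1 := by linarith
      have : (2:ℤ) * n = 2 * n₀ + 1 := by exact_mod_cast this
      omega
    · have hy : (n₁ : ℝ) + 1/2 ∈ uIcc (ψ 0) (ψ 1) := by
        rw [hn₀, hn₁, uIcc_of_ge (by exact_mod_cast hgt.le)]
        constructor
        · linarith
        · have : (n₁ : ℝ) + 1 ≤ n₀ := by exact_mod_cast hgt
          linarith
      obtain ⟨t, ht, hψt⟩ := hIVT hy
      obtain ⟨n, hn⟩ := hψint t (by rw [uIcc_of_le (by norm_num : (0:ℝ) ≤ 1)] at ht; exact ht)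
      rw [hn] at hψt
      have : (2:ℝ) * n = 2 * n₁ + 1 := by linarith
      have : (2:ℤ) * n = 2 * n₁ + 1 := by exact_mod_cast this
      omega
  -- conclude h 0 = h 1
  have hre : h 0 = n₀ * (2 * Real.pi * Complex.I) := by
    obtain ⟨n, hn⟩ := hint 0 h01
    have : ψ 0 = n := by
      rw [hψ]; simp only; rw [hn]
      have : ((n : ℂ) * (2 * Real.pi * Complex.I)).im = n * (2 * Real.pi) := by
        simp [Complex.mul_im]
      rw [this]; field_simp
    rw [hn₀] at this
    have : n = n₀ := by exact_mod_cast this.symm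
    rw [← this]; exact hn
  have hre1 : h 1 = n₁ * (2 * Real.pi * Complex.I) := by
    obtain ⟨n, hn⟩ := hint 1 h11
    have : ψ 1 = n := by
      rw [hψ]; simp only; rw [hn]
      have : ((n : ℂ) * (2 * Real.pi * Complex.I)).im = n * (2 * Real.pi) := by
        simp [Complex.mul_im]
      rw [this]; field_simp
    rw [hn₁] at this
    have : n = n₁ := by exact_mod_cast this.symm
    rw [← this]; exact hn
  have hn₀₁ : n₀ = n₁ := by
    have := hψeq; rw [hn₀, hn₁] at this; exact_mod_cast this
  have : h 1 = h 0 := by rw [hre, hre1, hn₀₁]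
  have hid : μ 1 - ν 1 = μ 0 - ν 0 := this
  linear_combination hid

lemma lift_transport {γ : ℝ → ℂ} {a b : ℂ} {μ : ℝ → ℂ}
    (hγ : ContinuousOn γ (Icc 0 1)) (hloop : γ 1 = γ 0)
    (hμ : ContinuousOn μ (Icc 0 1))
    (hexp : ∀ t ∈ Icc (0:ℝ) 1, Complex.exp (μ t) = γ t - a)
    (hsep : ∀ t ∈ Icc (0:ℝ) 1, 2 * ‖b - a‖ < ‖γ t - a‖) :
    ∃ ν : ℝ → ℂ, ContinuousOn ν (Icc 0 1) ∧ (∀ t ∈ Icc (0:ℝ) 1, Complex.exp (ν t) = γ t - b) ∧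
      ν 1 - ν 0 = μ 1 - μ 0 := by
  have hne : ∀ t ∈ Icc (0:ℝ) 1, γ t - a ≠ 0 := by
    intro t ht
    have := hsep t ht
    have hb := norm_nonneg (b - a)
    intro h0
    rw [h0, norm_zero] at this
    linarith
  have hslit : ∀ t ∈ Icc (0:ℝ) 1, (γ t - b) / (γ t - a) ∈ Complex.slitPlane := by
    intro t ht
    have h0 := hne t ht
    have hrw : (γ t - b) / (γ t - a) = 1 + (a - b) / (γ t - a) := by
      field_simp
      ring
    rw [hrw]
    apply Complex.mem_slitPlane_of_norm_lt_one
    rw [norm_div]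
    have h1 := hsep t ht
    have h2 : ‖a - b‖ = ‖b - a‖ := by rw [← norm_neg]; ring_nf
    have h3 : 0 < ‖γ t - a‖ := by
      have := norm_nonneg (b - a); linarith
    rw [h2, div_lt_one h3]
    linarith [norm_nonneg (b-a)]
  refine ⟨fun t => μ t + Complex.log ((γ t - b) / (γ t - a)), ?_, ?_, ?_⟩
  · apply hμ.add
    apply ContinuousOn.clog
    · exact (hγ.sub continuousOn_const).div (hγ.sub continuousOn_const) hne
    · exact hslit
  · intro t ht
    rw [Complex.exp_add, hexp t ht, Complex.exp_log (Complex.slitPlane_ne_zero (hslit t ht))]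
    field_simp [hne t ht]
  · have h10 : γ 1 - b = γ 0 - b := by rw [hloop]
    have h10' : γ 1 - a = γ 0 - a := by rw [hloop]
    simp only [h10, h10']
    ring

lemma winding_kill {γ lam : ℝ → ℂ} {c : ℂ}
    (hγ : ContinuousOn γ (Icc 0 1)) (hlam : ContinuousOn lam (Icc 0 1))
    (hloop : γ 1 = γ 0)
    (hlift : ∀ t ∈ Icc (0:ℝ) 1, Complex.exp (lam t) = γ t - c)
    (g : ℂ → ℂ) (hg : Differentiable ℂ g) (R' : ℝ)
    (hbound : ∀ t ∈ Icc (0:ℝ) 1, ‖g (γ t)‖ ≤ R') (hc : R' < ‖g c‖) :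
    lam 1 = lam 0 := by
  by_contra hne
  set Γ : Set ℂ := γ '' (Icc 0 1) with hΓ
  have hΓcpt : IsCompact Γ := isCompact_Icc.image_of_continuousOn hγ
  have hmindist : ∀ a : ℂ, a ∉ Γ → ∃ m > 0, ∀ t ∈ Icc (0:ℝ) 1, m ≤ ‖γ t - a‖ := by
    intro a ha
    obtain ⟨t₀, ht₀, hmin⟩ := isCompact_Icc.exists_isMinOn (f := fun t => ‖γ t - a‖)
      (Set.nonempty_Icc.mpr (by norm_num)) ((hγ.sub continuousOn_const).norm)
    refine ⟨‖γ t₀ - a‖, ?_, fun t ht => hmin ht⟩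
    exact norm_pos_iff.mpr (sub_ne_zero.mpr (fun hEq => ha ⟨t₀, ht₀, hEq⟩))
  set A : Set ℂ := {a : ℂ | a ∉ Γ ∧ ∃ μ : ℝ → ℂ, ContinuousOn μ (Icc 0 1) ∧
      (∀ t ∈ Icc (0:ℝ) 1, Complex.exp (μ t) = γ t - a) ∧ μ 1 ≠ μ 0} with hA
  have hcA : c ∈ A := by
    refine ⟨?_, lam, hlam, hlift, hne⟩
    rintro ⟨t, ht, hEq⟩
    have := hlift t ht
    rw [hEq, sub_self] at this
    exact Complex.exp_ne_zero _ this
  have hAopen : IsOpen A := by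
    rw [Metric.isOpen_iff]
    rintro a ⟨haΓ, μ, hμc, hμe, hμne⟩
    obtain ⟨m, hm, hmd⟩ := hmindist a haΓ
    refine ⟨m/4, by linarith, ?_⟩
    intro b hb
    rw [mem_ball, dist_eq_norm] at hb
    have hsep : ∀ t ∈ Icc (0:ℝ) 1, 2 * ‖b - a‖ < ‖γ t - a‖ := by
      intro t ht
      have := hmd t ht
      linarith
    obtain ⟨ν, hνc, hνe, hνgap⟩ := lift_transport hγ hloop hμc hμe hsep
    refine ⟨?_, ν, hνc, hνe, ?_⟩
    · rintro ⟨t, ht, hEq⟩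
      have h1 := hmd t ht
      have h2 : ‖γ t - b‖ = 0 := by rw [hEq]; simp
      have h3 : ‖γ t - a‖ ≤ ‖γ t - b‖ + ‖b - a‖ := by
        calc ‖γ t - a‖ = ‖(γ t - b) + (b - a)‖ := by ring_nf
        _ ≤ _ := norm_add_le _ _
      have h4 : ‖b - a‖ < m / 4 := hb
      linarith
    · intro hEq
      apply hμne
      have h0 : ν 1 - ν 0 = 0 := by rw [hEq]; ring
      rw [h0] at hνgap
      exact sub_eq_zero.mp hνgap.symm
  -- A is bounded
  obtain ⟨M, hM⟩ : ∃ M : ℝ, ∀ t ∈ Icc (0:ℝ) 1, ‖γ t‖ ≤ M := by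
    obtain ⟨t₁, ht₁, hmax⟩ := isCompact_Icc.exists_isMaxOn (f := fun t => ‖γ t‖)
      (Set.nonempty_Icc.mpr (by norm_num)) (hγ.norm)
    exact ⟨‖γ t₁‖, fun t ht => hmax ht⟩
  have hM0 : 0 ≤ M := le_trans (norm_nonneg _) (hM 0 (by norm_num))
  have hAbd : A ⊆ closedBall 0 (2*M+1) := by
    rintro a ⟨haΓ, μ, hμc, hμe, hμne⟩
    rw [mem_closedBall, dist_zero_right]
    by_contra hbig
    push_neg at hbig
    have ha0 : a ≠ 0 := by
      intro h0; rw [h0, norm_zero] at hbig; linarith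
    have hslit : ∀ t ∈ Icc (0:ℝ) 1, 1 - γ t / a ∈ Complex.slitPlane := by
      intro t ht
      have : (1:ℂ) - γ t / a = 1 + (- (γ t / a)) := by ring
      rw [this]
      apply Complex.mem_slitPlane_of_norm_lt_one
      rw [norm_neg, norm_div]
      have h1 := hM t ht
      have h2 : 0 < ‖a‖ := by linarith
      rw [div_lt_one h2]
      linarith
    set ν : ℝ → ℂ := fun t => Complex.log (-a) + Complex.log (1 - γ t / a) with hν
    have hνc : ContinuousOn ν (Icc 0 1) := by
      apply continuousOn_const.add
      apply ContinuousOn.clog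
      · exact continuousOn_const.sub (hγ.div_const a)
      · exact hslit
    have hνe : ∀ t ∈ Icc (0:ℝ) 1, Complex.exp (ν t) = γ t - a := by
      intro t ht
      rw [hν]
      simp only
      rw [Complex.exp_add, Complex.exp_log (neg_ne_zero.mpr ha0),
        Complex.exp_log (Complex.slitPlane_ne_zero (hslit t ht))]
      field_simp
      ring
    have hgap := lift_gap_eq hμc hνc (fun t ht => by rw [hμe t ht, hνe t ht])
    apply hμne
    have hν10 : ν 1 = ν 0 := by rw [hν]; simp only [hloop]
    rw [hν10] at hgap
    have : μ 1 - μ 0 = 0 := by rw [hgap]; ring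
    linear_combination this
  -- frontier A ⊆ Γ
  have hfr : frontier A ⊆ Γ := by
    intro b hb
    rw [hAopen.frontier_eq, mem_diff] at hb
    obtain ⟨hbc, hbA⟩ := hb
    by_contra hbΓ
    obtain ⟨m, hm, hmd⟩ := hmindist b hbΓ
    rw [Metric.mem_closure_iff] at hbc
    obtain ⟨a, haA, hab⟩ := hbc (m/4) (by linarith)
    obtain ⟨haΓ, μ, hμc, hμe, hμne⟩ := haA
    rw [dist_eq_norm, norm_sub_rev] at hab
    have hsep : ∀ t ∈ Icc (0:ℝ) 1, 2 * ‖b - a‖ < ‖γ t - a‖ := by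
      intro t ht
      have h1 := hmd t ht
      have h3 : ‖γ t - b‖ ≤ ‖γ t - a‖ + ‖a - b‖ := by
        calc ‖γ t - b‖ = ‖(γ t - a) + (a - b)‖ := by ring_nf
        _ ≤ _ := norm_add_le _ _
      have h4 : ‖b - a‖ = ‖a - b‖ := norm_sub_rev b a
      linarith
    obtain ⟨ν, hνc, hνe, hνgap⟩ := lift_transport hγ hloop hμc hμe hsep
    apply hbA
    refine ⟨hbΓ, ν, hνc, hνe, ?_⟩
    intro hEq
    apply hμne
    have h0 : ν 1 - ν 0 = 0 := by rw [hEq]; ring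
    rw [h0] at hνgap
    exact sub_eq_zero.mp hνgap.symm
  -- maximum modulus
  have hAbdd : IsBounded A := (isBounded_closedBall).subset hAbd
  have := Complex.norm_le_of_forall_mem_frontier_norm_le hAbdd hg.diffContOnCl
    (fun w hw => by
      obtain ⟨t, ht, hEq⟩ := hfr hw
      rw [← hEq]
      exact hbound t ht)
    (subset_closure hcA)
  linarith



-- ===== Module 4 : holomorphic logarithm on components =====

lemma exists_log_on_component {U : Set ℂ} (hU : IsOpen U) {c' : ℂ}
    (g : ℂ → ℂ) (hg : Differentiable ℂ g) {R' : ℝ}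
    (hbound : ∀ w ∈ U, ‖g w‖ ≤ R') (hgc : R' < ‖g c'‖) {z₁ : ℂ} (hz₁ : z₁ ∈ U) :
    ∃ L : ℂ → ℂ, (∀ w ∈ connectedComponentIn U z₁, DifferentiableAt ℂ L w) ∧
      ∀ w ∈ connectedComponentIn U z₁, Complex.exp (L w) = w - c' := by
  classical
  set W := connectedComponentIn U z₁ with hW
  have hWopen : IsOpen W := hU.connectedComponentIn
  have hWsub : W ⊆ U := connectedComponentIn_subset _ _
  have hWz₁ : z₁ ∈ W := mem_connectedComponentIn hz₁
  have hWconn : IsPreconnected W := isPreconnected_connectedComponentIn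
  have hWc : ∀ w ∈ W, w ≠ c' := by
    intro w hw hEq
    rw [hEq] at hw
    exact absurd (hbound c' (hWsub hw)) (not_le.mpr hgc)
  set T : Set (ℂ × ℂ) := {p : ℂ × ℂ | p.1 ∈ W ∧ Complex.exp p.2 = p.1 - c'} with hT
  set base : ℂ × ℂ := (z₁, Complex.log (z₁ - c')) with hbasedef
  have hbase : base ∈ T :=
    ⟨hWz₁, Complex.exp_log (sub_ne_zero.mpr (hWc z₁ hWz₁))⟩
  -- local sheets
  have sheet : ∀ w ℓ : ℂ, (w, ℓ) ∈ T → ∀ r : ℝ, 0 < r → ball w r ⊆ W → r ≤ ‖w - c'‖ / 2 →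
      ∀ x ∈ ball w r,
        (x, ℓ + Complex.log ((x - c') / (w - c'))) ∈ T ∧
        JoinedIn T (w, ℓ) (x, ℓ + Complex.log ((x - c') / (w - c'))) := by
    intro w ℓ hwT r hr hbW hrc x hx
    obtain ⟨hwW, hwe⟩ := hwT
    have hwc0 : w - c' ≠ 0 := sub_ne_zero.mpr (hWc w hwW)
    have hwcpos : 0 < ‖w - c'‖ := norm_pos_iff.mpr hwc0
    have hratio : ∀ y ∈ ball w r, (y - c') / (w - c') ∈ Complex.slitPlane := by
      intro y hy
      have hrw : (y - c') / (w - c') = 1 + (y - w) / (w - c') := by field_simp; ring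
      rw [hrw]
      apply Complex.mem_slitPlane_of_norm_lt_one
      rw [norm_div, div_lt_one hwcpos]
      have : ‖y - w‖ < r := by rw [mem_ball, dist_eq_norm] at hy; exact hy
      linarith
    set σ : ℂ → ℂ := fun y => ℓ + Complex.log ((y - c') / (w - c')) with hσ
    have hσcont : ContinuousOn σ (ball w r) := by
      apply continuousOn_const.add
      apply ContinuousOn.clog
      · exact (continuousOn_id.sub continuousOn_const).div_const _
      · exact hratio
    have hTmem : ∀ y ∈ ball w r, (y, σ y) ∈ T := by
      intro y hy
      refine ⟨hbW hy, ?_⟩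
      rw [hσ]
      simp only
      rw [Complex.exp_add, hwe, Complex.exp_log (Complex.slitPlane_ne_zero (hratio y hy))]
      field_simp
    refine ⟨hTmem x hx, ?_⟩
    -- path along segment
    have hseg : ∀ t : ℝ, t ∈ Icc (0:ℝ) 1 → w + (t:ℂ) * (x - w) ∈ ball w r := by
      intro t ht
      rw [mem_ball, dist_eq_norm]
      have : w + (t:ℂ) * (x - w) - w = (t:ℂ) * (x - w) := by ring
      rw [this, norm_mul]
      have ht1 : ‖(t:ℂ)‖ ≤ 1 := by
        rw [Complex.norm_real, Real.norm_eq_abs, _root_.abs_of_nonneg ht.1]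
        exact ht.2
      have hxw : ‖x - w‖ < r := by rw [mem_ball, dist_eq_norm] at hx; exact hx
      have hxw0 : 0 ≤ ‖x - w‖ := norm_nonneg _
      nlinarith
    apply JoinedIn.ofLine (f := fun t : ℝ => (w + (t:ℂ) * (x - w), σ (w + (t:ℂ) * (x - w))))
    · -- continuity on I
      have hc1 : ContinuousOn (fun t : ℝ => w + (t:ℂ) * (x - w)) (Icc 0 1) := by
        apply ContinuousOn.add continuousOn_const
        exact (Complex.continuous_ofReal.continuousOn).mul continuousOn_const
      apply ContinuousOn.prodMk hc1
      exact hσcont.comp hc1 (fun t ht => hseg t ht)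
    · have h0 : w + ((0:ℝ):ℂ) * (x - w) = w := by push_cast; ring
      simp only [h0, hσ, div_self hwc0, Complex.log_one, add_zero]
    · have h1 : w + ((1:ℝ):ℂ) * (x - w) = x := by push_cast; ring
      rw [h1]
    · rintro p ⟨t, ht, rfl⟩
      exact hTmem _ (hseg t ht)
  -- uniqueness of the continuation value
  have huniq : ∀ w ℓ ℓ' : ℂ, JoinedIn T base (w, ℓ) → JoinedIn T base (w, ℓ') → ℓ = ℓ' := by
    intro w ℓ ℓ' h1 h2
    have jp : JoinedIn T (w, ℓ) (w, ℓ') := h1.symm.trans h2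
    set p := jp.somePath with hp
    set γ : ℝ → ℂ := fun s => (p.extend s).1 with hγdef
    set lam : ℝ → ℂ := fun s => (p.extend s).2 with hlamdef
    have hmemT : ∀ s ∈ Icc (0:ℝ) 1, p.extend s ∈ T := by
      intro s hs
      rw [Path.extend_apply p hs]
      exact jp.somePath_mem _
    have hγc : ContinuousOn γ (Icc 0 1) :=
      (continuous_fst.comp p.continuous_extend).continuousOn
    have hlamc : ContinuousOn lam (Icc 0 1) :=
      (continuous_snd.comp p.continuous_extend).continuousOn
    have hloop : γ 1 = γ 0 := by
      rw [hγdef]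
      simp only
      rw [p.extend_one, p.extend_zero]
    have hlift : ∀ t ∈ Icc (0:ℝ) 1, Complex.exp (lam t) = γ t - c' := by
      intro t ht
      exact (hmemT t ht).2
    have hboundΓ : ∀ t ∈ Icc (0:ℝ) 1, ‖g (γ t)‖ ≤ R' := by
      intro t ht
      exact hbound _ (hWsub (hmemT t ht).1)
    have := winding_kill hγc hlamc hloop hlift g hg R' hboundΓ hgc
    have he1 : lam 1 = ℓ' := by rw [hlamdef]; simp only; rw [p.extend_one]
    have he0 : lam 0 = ℓ := by rw [hlamdef]; simp only; rw [p.extend_zero]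
    rw [he1, he0] at this
    exact this.symm
  -- radius function
  have hrad : ∀ w ∈ W, ∃ r > 0, ball w r ⊆ W ∧ r ≤ ‖w - c'‖ / 2 := by
    intro w hw
    obtain ⟨ε, hε, hball⟩ := Metric.isOpen_iff.mp hWopen w hw
    have hwc0 : 0 < ‖w - c'‖ := norm_pos_iff.mpr (sub_ne_zero.mpr (hWc w hw))
    refine ⟨min ε (‖w - c'‖ / 2), by positivity, ?_, min_le_right _ _⟩
    exact subset_trans (ball_subset_ball (min_le_left _ _)) hball
  -- the reachable set is all of W
  set S : Set ℂ := {w : ℂ | ∃ ℓ, JoinedIn T base (w, ℓ)} with hS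
  have hstep1 : ∀ w ∈ W ∩ S, ∃ r > 0, ball w r ⊆ W ∩ S := by
    rintro w ⟨hwW, ℓ, hj⟩
    obtain ⟨r, hr, hbW, hrc⟩ := hrad w hwW
    refine ⟨r, hr, ?_⟩
    intro x hx
    have hsx := sheet w ℓ hj.target_mem r hr hbW hrc x hx
    exact ⟨hbW hx, _, hj.trans hsx.2⟩
  have hOopen : IsOpen (W ∩ S) := by
    rw [Metric.isOpen_iff]
    intro w hw
    obtain ⟨r, hr, hsub⟩ := hstep1 w hw
    exact ⟨r, hr, hsub⟩
  have hstep2 : ∀ w ∈ W, w ∈ closure (W ∩ S) → w ∈ S := by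
    intro w hwW hwcl
    obtain ⟨r, hr, hbW, hrc⟩ := hrad w hwW
    rw [Metric.mem_closure_iff] at hwcl
    obtain ⟨w', hw', hdist⟩ := hwcl (r/8) (by linarith)
    obtain ⟨hw'W, ℓ', hj'⟩ := hw'
    -- apply sheet at w' with radius r/2
    have hd : ‖w - w'‖ < r / 8 := by rwa [dist_eq_norm] at hdist
    have hbW' : ball w' (r/2) ⊆ W := by
      intro y hy
      apply hbW
      rw [mem_ball, dist_eq_norm] at hy ⊢
      have : y - w = (y - w') + (w' - w) := by ring
      rw [this]
      have h1 : ‖w' - w‖ = ‖w - w'‖ := norm_sub_rev _ _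
      calc ‖(y - w') + (w' - w)‖ ≤ ‖y - w'‖ + ‖w' - w‖ := norm_add_le _ _
      _ < r/2 + r/8 := by rw [h1]; exact add_lt_add hy hd
      _ < r := by linarith
    have hrc' : r/2 ≤ ‖w' - c'‖ / 2 := by
      have h1 : ‖w - c'‖ ≤ ‖w - w'‖ + ‖w' - c'‖ := by
        calc ‖w - c'‖ = ‖(w - w') + (w' - c')‖ := by ring_nf
        _ ≤ _ := norm_add_le _ _
      have h2 : 2 * r ≤ ‖w - c'‖ := by linarith
      linarith
    have hwball : w ∈ ball w' (r/2) := by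
      rw [mem_ball, dist_eq_norm]
      linarith
    have hsx := sheet w' ℓ' hj'.target_mem (r/2) (by linarith) hbW' hrc' w hwball
    exact ⟨_, hj'.trans hsx.2⟩
  have hWS : W ⊆ S := by
    have hsplit : W ⊆ (W ∩ S) ∪ (closure (W ∩ S))ᶜ := by
      intro w hw
      by_cases hcl : w ∈ closure (W ∩ S)
      · exact Or.inl ⟨hw, hstep2 w hw hcl⟩
      · exact Or.inr hcl
    have hz₁S : z₁ ∈ W ∩ S := ⟨hWz₁, ⟨_, JoinedIn.refl hbase⟩⟩
    by_cases hv : (W ∩ (closure (W ∩ S))ᶜ).Nonempty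
    · exfalso
      have := hWconn _ _ hOopen (isClosed_closure.isOpen_compl) hsplit
        ⟨z₁, hWz₁, hz₁S⟩ hv
      obtain ⟨q, _, hq1, hq2⟩ := this
      exact hq2 (subset_closure hq1)
    · intro w hw
      rcases hsplit hw with h1 | h2
      · exact h1.2
      · exact absurd ⟨w, hw, h2⟩ hv
  -- define L
  set L : ℂ → ℂ := fun w => if h : ∃ ℓ, JoinedIn T base (w, ℓ) then h.choose else 0 with hLdef
  have hLmem : ∀ w ∈ W, JoinedIn T base (w, L w) := by
    intro w hw
    have hex : ∃ ℓ, JoinedIn T base (w, ℓ) := hWS hw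
    rw [hLdef]
    simp only [dif_pos hex]
    exact hex.choose_spec
  have hLexp : ∀ w ∈ W, Complex.exp (L w) = w - c' := by
    intro w hw
    exact (hLmem w hw).target_mem.2
  refine ⟨L, ?_, hLexp⟩
  intro w hw
  obtain ⟨r, hr, hbW, hrc⟩ := hrad w hw
  have hj := hLmem w hw
  have hEv : L =ᶠ[nhds w] (fun x => L w + Complex.log ((x - c') / (w - c'))) := by
    filter_upwards [ball_mem_nhds w hr] with x hx
    have hsx := sheet w (L w) hj.target_mem r hr hbW hrc x hx
    exact huniq x (L x) _ (hLmem x (hbW hx)) (hj.trans hsx.2)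
  rw [hEv.differentiableAt_iff]
  apply DifferentiableAt.add (differentiableAt_const _)
  have hval : (w - c') / (w - c') = 1 := div_self (sub_ne_zero.mpr (hWc w hw))
  have hf' : DifferentiableAt ℂ (fun y : ℂ => (y - c') / (w - c')) w :=
    (differentiableAt_id.sub_const _).div_const _
  have hlog : DifferentiableAt ℂ Complex.log ((fun y : ℂ => (y - c') / (w - c')) w) := by
    simp only [hval]
    exact Complex.differentiableAt_log Complex.one_mem_slitPlane
  exact hlog.comp w hf'

-- ===== Module 5 : inverse branch chains =====

lemma differentiable_fc_iter (j : ℕ) : Differentiable ℂ ((fc c)^[j]) := by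
  induction j with
  | zero => simpa using differentiable_id
  | succ n ih =>
      rw [Function.iterate_succ']
      exact (((differentiable_pow 2).add_const c)).comp ih

lemma continuous_fc : Continuous (fc c) := by unfold fc; continuity

lemma chain {m : ℕ} (hm : ∀ j, m ≤ j → Rr c + 1 ≤ ‖(fc c)^[j] c‖) :
    ∀ n : ℕ, ∀ x : ℂ, x ∈ KK c →
    ∃ G : ℂ → ℂ,
      (∀ w ∈ connectedComponentIn (VV c m) ((fc c)^[n] x), DifferentiableAt ℂ G w) ∧
      (∀ w ∈ connectedComponentIn (VV c m) ((fc c)^[n] x),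
        G w ∈ connectedComponentIn (VV c (m+n)) x) ∧
      (∀ y ∈ connectedComponentIn (VV c (m+n)) x, G ((fc c)^[n] y) = y) := by
  intro n
  induction n with
  | zero =>
      intro x hx
      refine ⟨id, fun w _ => differentiableAt_id, ?_, ?_⟩
      · intro w hw
        simpa using hw
      · intro y hy
        simp
  | succ n ih =>
      intro x hx
      have hx' : fc c x ∈ KK c := fc_mem_KK hx
      obtain ⟨G', hG'diff, hG'mem, hG'track⟩ := ih (fc c x) hx'
      have hitereq : (fc c)^[n] (fc c x) = (fc c)^[n+1] x :=
        (Function.iterate_succ_apply (fc c) n x).symm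
      rw [hitereq] at hG'diff hG'mem
      have hfcx : fc c x ∈ VV c (m+n) := KK_subset_VV hx' _
      obtain ⟨L, hLdiff, hLexp⟩ := exists_log_on_component (isOpen_VV (m+n))
        ((fc c)^[m+n]) (differentiable_fc_iter (m+n)) (R' := Rr c)
        (fun w hw => le_of_lt hw)
        (by have := hm (m+n) (Nat.le_add_right m n); linarith) hfcx
      set Y' := connectedComponentIn (VV c (m+n)) (fc c x) with hY'
      set sq : ℂ → ℂ := fun u => Complex.exp (L u / 2) with hsqdef
      have hsq : ∀ u ∈ Y', sq u ^ 2 = u - c := by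
        intro u hu
        rw [hsqdef]
        simp only
        rw [← Complex.exp_nat_mul]
        have : (2:ℕ) * (L u / 2) = L u := by push_cast; ring
        rw [this]
        exact hLexp u hu
      -- x is nonzero
      have h0V : (0:ℂ) ∉ VV c (m+n+1) := by
        intro h0
        have : (fc c)^[m+n+1] 0 = (fc c)^[m+n] c := by
          rw [Function.iterate_succ_apply]
          norm_num [fc]
        rw [VV, mem_setOf_eq, this] at h0
        have := hm (m+n) (Nat.le_add_right m n)
        linarith
      have hxV : x ∈ VV c (m+n+1) := KK_subset_VV hx _
      have hx0 : x ≠ 0 := fun hEq => h0V (hEq ▸ hxV)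
      set e : ℂ := sq (fc c x) with he
      have hfcxY' : fc c x ∈ Y' := mem_connectedComponentIn hfcx
      have he2 : e ^ 2 = x ^ 2 := by
        rw [he, hsq _ hfcxY']
        unfold fc
        ring
      have he0 : e ≠ 0 := by rw [he, hsqdef]; exact Complex.exp_ne_zero _
      set s : ℂ := x / e with hs
      have hs2 : s ^ 2 = 1 := by
        rw [hs, div_pow, he2, div_self (pow_ne_zero 2 hx0)]
      set g0 : ℂ → ℂ := fun u => s * sq u with hg0
      have hg0x : g0 (fc c x) = x := by
        rw [hg0]
        simp only
        rw [← he, hs, div_mul_cancel₀ _ he0]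
      have hg0sq : ∀ u ∈ Y', g0 u ^ 2 = u - c := by
        intro u hu
        rw [hg0]
        simp only
        rw [mul_pow, hs2, one_mul]
        exact hsq u hu
      have hfg0 : ∀ u ∈ Y', fc c (g0 u) = u := by
        intro u hu
        unfold fc
        rw [hg0sq u hu]
        ring
      have hg0diff : ∀ u ∈ Y', DifferentiableAt ℂ g0 u := by
        intro u hu
        exact (((hLdiff u hu).div_const 2).cexp).const_mul s
      have hg0cont : ContinuousOn g0 Y' := fun u hu =>
        ((hg0diff u hu).continuousAt).continuousWithinAt
      -- forward image of new component lands in Y'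
      have hYnewconn : IsPreconnected (connectedComponentIn (VV c (m+n+1)) x) :=
        isPreconnected_connectedComponentIn
      have hfy : ∀ y ∈ connectedComponentIn (VV c (m+n+1)) x, fc c y ∈ Y' := by
        intro y hy
        have himg : fc c '' (connectedComponentIn (VV c (m+n+1)) x) ⊆ Y' := by
          apply IsPreconnected.subset_connectedComponentIn
          · exact hYnewconn.image _ (continuous_fc.continuousOn)
          · exact ⟨x, mem_connectedComponentIn hxV, rfl⟩
          · rintro p ⟨z, hz, rfl⟩
            have : z ∈ VV c (m+n+1) := connectedComponentIn_subset _ _ hz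
            rwa [← mem_VV_succ_iff]
        exact himg ⟨y, hy, rfl⟩
      -- branch image lands in the new component
      have himg2 : ∀ u ∈ Y', g0 u ∈ connectedComponentIn (VV c (m+n+1)) x := by
        intro u hu
        have hsub : g0 '' Y' ⊆ connectedComponentIn (VV c (m+n+1)) x := by
          apply IsPreconnected.subset_connectedComponentIn
          · exact isPreconnected_connectedComponentIn.image _ hg0cont
          · exact ⟨fc c x, hfcxY', hg0x⟩
          · rintro p ⟨z, hz, rfl⟩
            rw [mem_VV_succ_iff, hfg0 z hz]
            exact connectedComponentIn_subset _ _ hz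
        exact hsub ⟨u, hu, rfl⟩
      -- sign lock : g0 (fc c y) = y on the new component
      have htrack : ∀ y ∈ connectedComponentIn (VV c (m+n+1)) x, g0 (fc c y) = y := by
        set Ynew := connectedComponentIn (VV c (m+n+1)) x with hYnew
        set q : ℂ → ℂ := fun y => g0 (fc c y) with hq
        have hqcont : ContinuousOn q Ynew := by
          apply hg0cont.comp (continuous_fc.continuousOn)
          intro y hy
          exact hfy y hy
        have hfact : ∀ y ∈ Ynew, (q y - y) * (q y + y) = 0 := by
          intro y hy
          have h1 : q y ^ 2 = y ^ 2 := by
            rw [hq]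
            simp only
            rw [hg0sq _ (hfy y hy)]
            unfold fc
            ring
          have : q y ^ 2 - y ^ 2 = 0 := by rw [h1]; ring
          calc (q y - y) * (q y + y) = q y ^ 2 - y ^ 2 := by ring
          _ = 0 := this
        set E₁ := {y ∈ Ynew | q y = y} with hE₁
        set E₂ := {y ∈ Ynew | q y = -y} with hE₂
        have hcover : Ynew ⊆ E₁ ∪ E₂ := by
          intro y hy
          rcases mul_eq_zero.mp (hfact y hy) with h | h
          · exact Or.inl ⟨hy, by linear_combination h⟩
          · exact Or.inr ⟨hy, by linear_combination h⟩
        have hxE₁ : x ∈ E₁ := ⟨mem_connectedComponentIn hxV, by rw [hq]; exact hg0x⟩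
        by_cases hE₂emp : E₂ = ∅
        · intro y hy
          rcases hcover hy with h | h
          · exact h.2
          · rw [hE₂emp] at h; exact absurd h (notMem_empty y)
        · exfalso
          obtain ⟨y₂, hy₂⟩ := nonempty_iff_ne_empty.mpr hE₂emp
          have hkey := isPreconnected_closed_iff.mp hYnewconn (closure E₁) (closure E₂)
            isClosed_closure isClosed_closure
            (fun y hy => by
              rcases hcover hy with h | h
              · exact Or.inl (subset_closure h)
              · exact Or.inr (subset_closure h))
            ⟨x, hxE₁.1, subset_closure hxE₁⟩
            ⟨y₂, hy₂.1, subset_closure hy₂⟩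
          obtain ⟨ys, hysY, hys1, hys2⟩ := hkey
          have hd1 : q ys - ys = 0 := by
            have hcw : ContinuousWithinAt (fun y => q y - y) E₁ ys :=
              (((hqcont ys hysY).mono (fun z hz => hz.1)).sub continuousWithinAt_id)
            have hmem := hcw.mem_closure_image hys1
            have himg : (fun y => q y - y) '' E₁ ⊆ {0} := by
              rintro p ⟨z, hz, rfl⟩
              simp [hz.2]
            have := closure_minimal himg isClosed_singleton hmem
            simpa using this
          have hd2 : q ys + ys = 0 := by
            have hcw : ContinuousWithinAt (fun y => q y + y) E₂ ys :=
              (((hqcont ys hysY).mono (fun z hz => hz.1)).add continuousWithinAt_id)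
            have hmem := hcw.mem_closure_image hys2
            have himg : (fun y => q y + y) '' E₂ ⊆ {0} := by
              rintro p ⟨z, hz, rfl⟩
              simp [hz.2]
            have := closure_minimal himg isClosed_singleton hmem
            simpa using this
          have hys0 : ys = 0 := by linear_combination (hd1 - hd2) / 2 * (-1)
          rw [hys0] at hysY
          exact h0V (connectedComponentIn_subset _ _ hysY)
      refine ⟨fun w => g0 (G' w), ?_, ?_, ?_⟩
      · intro w hw
        have h1 := hG'diff w hw
        have h2 : G' w ∈ Y' := hG'mem w hw
        exact (hg0diff _ h2).comp w h1
      · intro w hw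
        exact himg2 _ (hG'mem w hw)
      · intro y hy
        have hyY' : fc c y ∈ Y' := hfy y hy
        have hstep : (fc c)^[n+1] y = (fc c)^[n] (fc c y) := Function.iterate_succ_apply (fc c) n y
        rw [hstep]
        show g0 (G' ((fc c)^[n] (fc c y))) = y
        rw [hG'track (fc c y) hyY']
        exact htrack y hy

-- ===== Module 6 : normal family helpers =====

lemma lipschitz_of_bounded {g : ℂ → ℂ} {z₀ : ℂ} {r M : ℝ} (hr : 0 < r)
    (hg : DifferentiableOn ℂ g (ball z₀ r))
    (hM : ∀ w ∈ ball z₀ r, ‖g w‖ ≤ M) :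
    ∀ a ∈ ball z₀ (r/4), ∀ b ∈ ball z₀ (r/4), ‖g a - g b‖ ≤ 8 * M / r * ‖a - b‖ := by
  intro a ha b hb
  have hM0 : 0 ≤ M := le_trans (norm_nonneg _) (hM z₀ (mem_ball_self hr))
  rcases eq_or_ne b a with rfl | hba
  · simp
  set q : ℂ → ℂ := dslope g a with hq
  have hqd : DifferentiableOn ℂ q (ball z₀ r) := by
    intro x hx
    rcases eq_or_ne x a with rfl | hxa
    · have hana : AnalyticAt ℂ g x :=
        (hg.analyticOnNhd isOpen_ball) x hx
      obtain ⟨p, hp⟩ := hana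
      exact ((hp.has_fpower_series_dslope_fslope).analyticAt).differentiableAt.differentiableWithinAt
    · exact (differentiableWithinAt_dslope_of_ne hxa).mpr (hg x hx)
  have hq2 : DiffContOnCl ℂ q (ball z₀ (r/2)) := by
    constructor
    · exact hqd.mono (ball_subset_ball (by linarith))
    · apply (hqd.continuousOn).mono
      rw [closure_ball z₀ (by positivity : (r:ℝ)/2 ≠ 0)]
      intro z hz
      rw [mem_closedBall] at hz
      rw [mem_ball]
      linarith [hz]
  have hfr : ∀ w ∈ frontier (ball z₀ (r/2)), ‖q w‖ ≤ 8 * M / r := by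
    intro w hw
    rw [frontier_ball z₀ (by positivity : (r:ℝ)/2 ≠ 0), mem_sphere_iff_norm] at hw
    have hwa : r/4 < ‖w - a‖ := by
      have h1 : ‖a - z₀‖ < r/4 := by rw [mem_ball, dist_eq_norm] at ha; exact ha
      have h2 : ‖w - z₀‖ ≤ ‖w - a‖ + ‖a - z₀‖ := by
        calc ‖w - z₀‖ = ‖(w - a) + (a - z₀)‖ := by ring_nf
        _ ≤ _ := norm_add_le _ _
      rw [hw] at h2
      linarith
    have hwa0 : w ≠ a := by
      intro hEq
      rw [hEq, sub_self, norm_zero] at hwa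
      linarith
    rw [hq, dslope_of_ne g hwa0, slope_def_field]
    have hwball : w ∈ ball z₀ r := by
      rw [mem_ball, dist_eq_norm]
      have : ‖w - z₀‖ = r/2 := hw
      linarith
    have haball : a ∈ ball z₀ r := ball_subset_ball (by linarith) ha
    have hnum : ‖g w - g a‖ ≤ 2 * M := by
      calc ‖g w - g a‖ ≤ ‖g w‖ + ‖g a‖ := norm_sub_le _ _
      _ ≤ M + M := add_le_add (hM w hwball) (hM a haball)
      _ = 2 * M := by ring
    have h4 : (0:ℝ) < ‖w - a‖ := by linarith
    rw [norm_div, div_le_iff₀ h4]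
    have heq : 8 * M / r * (r/4) = 2 * M := by field_simp; ring
    calc ‖g w - g a‖ ≤ 2 * M := hnum
    _ = 8 * M / r * (r/4) := heq.symm
    _ ≤ 8 * M / r * ‖w - a‖ := by
        apply mul_le_mul_of_nonneg_left hwa.le
        positivity
  have hqb : ‖q b‖ ≤ 8 * M / r := by
    apply Complex.norm_le_of_forall_mem_frontier_norm_le isBounded_ball hq2 hfr
    apply subset_closure
    exact ball_subset_ball (by linarith) hb
  rw [hq, dslope_of_ne g hba, slope_def_field, norm_div] at hqb
  have h5 : (0:ℝ) < ‖b - a‖ := norm_pos_iff.mpr (sub_ne_zero.mpr hba)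
  rw [div_le_iff₀ h5] at hqb
  calc ‖g a - g b‖ = ‖g b - g a‖ := norm_sub_rev _ _
  _ ≤ 8 * M / r * ‖b - a‖ := hqb
  _ = 8 * M / r * ‖a - b‖ := by rw [norm_sub_rev]

lemma ultra_lim_mem {α : Type*} (F : Ultrafilter α) {s : α → ℂ} {K : Set ℂ}
    (hK : IsCompact K) (hb : ∀ᶠ n in (F : Filter α), s n ∈ K) :
    ∃ l ∈ K, Tendsto s (F : Filter α) (nhds l) := by
  have hle : (F.map s : Filter ℂ) ≤ Filter.principal K := by
    rw [Filter.le_principal_iff]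
    exact Filter.mem_map.mpr hb
  obtain ⟨l, hlK, hconv⟩ := hK.ultrafilter_le_nhds (F.map s) hle
  exact ⟨l, hlK, hconv⟩

-- ===== Module 7 : main lemma =====

lemma main_ball {m : ℕ} (hm : ∀ j, m ≤ j → Rr c + 1 ≤ ‖(fc c)^[j] c‖)
    {T : Set ℂ} (hT : IsPreconnected T) (hTK : T ⊆ KK c)
    {x y : ℂ} (hx : x ∈ T) (hy : y ∈ T) (hxy : x ≠ y) :
    ∃ ρ > 0, ball x ρ ⊆ KK c := by
  classical
  have hRpos : 0 < Rr c := Rr_pos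
  have hxK : x ∈ KK c := hTK hx
  have hyK : y ∈ KK c := hTK hy
  have hKbd : KK c ⊆ ball 0 (Rr c) := fun z hz => VV_subset_ball 0 (KK_subset_VV hz 0)
  have hKcpt : IsCompact (KK c) :=
    Metric.isCompact_of_isClosed_isBounded isClosed_KK (isBounded_ball.subset hKbd)
  obtain ⟨d₀, hd₀, hthick⟩ := hKcpt.exists_thickening_subset_open (isOpen_VV m)
    (fun z hz => KK_subset_VV hz m)
  have hballV : ∀ z ∈ KK c, ball z d₀ ⊆ VV c m := by
    intro z hz
    exact subset_trans (ball_subset_thickening hz d₀) hthick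
  obtain ⟨tfin, htK, hcover⟩ := hKcpt.elim_nhds_subcover (fun z => ball z d₀)
    (fun z _ => ball_mem_nhds z hd₀)
  set u : ℕ → ℂ := fun n => (fc c)^[n] x with hu
  set v : ℕ → ℂ := fun n => (fc c)^[n] y with hv
  have hun : ∀ n, u n ∈ KK c := fun n => iter_mem_KK hxK n
  have hvn : ∀ n, v n ∈ KK c := fun n => iter_mem_KK hyK n
  have hchoice : ∀ n, ∃ z ∈ tfin, u n ∈ ball z d₀ := by
    intro n
    have := hcover (hun n)
    rw [Set.mem_iUnion₂] at this
    obtain ⟨z, hz1, hz2⟩ := this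
    exact ⟨z, hz1, hz2⟩
  choose zc hzct hzcb using hchoice
  set 𝒰 : Ultrafilter ℕ := Filter.hyperfilter ℕ with h𝒰
  have hatTop : (𝒰 : Filter ℕ) ≤ Filter.atTop := Nat.hyperfilter_le_atTop
  obtain ⟨z₀, hz₀t, hE₀mem⟩ : ∃ z₀ ∈ tfin, {n : ℕ | zc n = z₀} ∈ 𝒰 := by
    have huniv : (⋃ z ∈ (↑tfin : Set ℂ), {n : ℕ | zc n = z}) ∈ 𝒰 := by
      have : (⋃ z ∈ (↑tfin : Set ℂ), {n : ℕ | zc n = z}) = Set.univ := by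
        ext n
        simp only [Set.mem_iUnion, Set.mem_setOf_eq, Set.mem_univ, iff_true]
        exact ⟨zc n, hzct n, rfl⟩
      rw [this]
      exact Filter.univ_mem
    rw [Ultrafilter.finite_biUnion_mem_iff tfin.finite_toSet] at huniv
    obtain ⟨z₀, h1, h2⟩ := huniv
    exact ⟨z₀, h1, h2⟩
  have hz₀K : z₀ ∈ KK c := htK z₀ hz₀t
  set W := connectedComponentIn (VV c m) z₀ with hWdef
  have hWopen : IsOpen W := (isOpen_VV m).connectedComponentIn
  have hWconn : IsPreconnected W := isPreconnected_connectedComponentIn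
  have hz₀W : z₀ ∈ W := mem_connectedComponentIn (KK_subset_VV hz₀K m)
  have hballW : ∀ p ∈ KK c, p ∈ W → ball p d₀ ⊆ W := by
    intro p hpK hpW
    have hpW' : p ∈ connectedComponentIn (VV c m) z₀ := hpW
    have h1 : ball p d₀ ⊆ connectedComponentIn (VV c m) p :=
      (convex_ball p d₀).isPreconnected.subset_connectedComponentIn
        (mem_ball_self hd₀) (hballV p hpK)
    have h2 : connectedComponentIn (VV c m) p = connectedComponentIn (VV c m) z₀ :=
      (connectedComponentIn_eq hpW').symm
    rw [hWdef, ← h2]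
    exact h1
  set E₀ : Set ℕ := {n : ℕ | zc n = z₀} with hE₀def
  have hE₀ : E₀ ∈ (𝒰 : Filter ℕ) := hE₀mem
  have huW : ∀ n ∈ E₀, u n ∈ W := by
    intro n hn
    have : u n ∈ ball z₀ d₀ := by rw [← hn]; exact hzcb n
    exact hballW z₀ hz₀K hz₀W this
  have hE₀W : ∀ n ∈ E₀, connectedComponentIn (VV c m) (u n) = W := by
    intro n hn
    have h3 : u n ∈ connectedComponentIn (VV c m) z₀ := huW n hn
    rw [hWdef]
    exact (connectedComponentIn_eq h3).symm
  choose G hGdiff hGmem hGtrack using fun n : ℕ => chain hm n x hxK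
  have hGd : ∀ n ∈ E₀, ∀ w ∈ W, DifferentiableAt ℂ (G n) w := by
    intro n hn w hw
    apply hGdiff n w
    rw [hE₀W n hn]
    exact hw
  have hGV : ∀ n ∈ E₀, ∀ w ∈ W, G n w ∈ VV c (m + n) := by
    intro n hn w hw
    apply connectedComponentIn_subset _ x
    apply hGmem n w
    rw [hE₀W n hn]
    exact hw
  have hGb : ∀ n ∈ E₀, ∀ w ∈ W, ‖G n w‖ ≤ Rr c := by
    intro n hn w hw
    have := VV_subset_ball (c := c) (m + n) (hGV n hn w hw)
    rw [mem_ball, dist_zero_right] at this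
    exact this.le
  have hGx : ∀ n, G n (u n) = x :=
    fun n => hGtrack n x (mem_connectedComponentIn (KK_subset_VV hxK _))
  have hGyv : ∀ n, G n (v n) = y := by
    intro n
    apply hGtrack n y
    have hsubT : T ⊆ connectedComponentIn (VV c (m + n)) x :=
      hT.subset_connectedComponentIn hx (fun z hz => KK_subset_VV (hTK hz) _)
    exact hsubT hy
  have hvW : ∀ n ∈ E₀, v n ∈ W := by
    intro n hn
    have himg : (fc c)^[n] '' T ⊆ connectedComponentIn (VV c m) (u n) := by
      apply IsPreconnected.subset_connectedComponentIn
      · exact hT.image _ ((continuous_fc_iter n).continuousOn)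
      · exact ⟨x, hx, rfl⟩
      · rintro p ⟨z, hz, rfl⟩
        exact KK_subset_VV (iter_mem_KK (hTK hz) n) m
    rw [hE₀W n hn] at himg
    exact himg ⟨y, hy, rfl⟩
  set g : ℂ → ℂ := fun w =>
    if hw : ∃ l, Tendsto (fun n => G n w) (𝒰 : Filter ℕ) (nhds l) then hw.choose else 0
    with hgdef
  have hgtendsto : ∀ w ∈ W, Tendsto (fun n => G n w) (𝒰 : Filter ℕ) (nhds (g w)) := by
    intro w hw
    have hex : ∃ l ∈ closedBall (0:ℂ) (Rr c),
        Tendsto (fun n => G n w) (𝒰 : Filter ℕ) (nhds l) := by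
      apply ultra_lim_mem 𝒰 (isCompact_closedBall 0 (Rr c))
      filter_upwards [hE₀] with n hn
      rw [mem_closedBall, dist_zero_right]
      exact hGb n hn w hw
    obtain ⟨l, _, hl⟩ := hex
    have hex2 : ∃ l, Tendsto (fun n => G n w) (𝒰 : Filter ℕ) (nhds l) := ⟨l, hl⟩
    rw [hgdef]
    simp only [dif_pos hex2]
    exact hex2.choose_spec
  have hLip : ∀ n ∈ E₀, ∀ z₁ : ℂ, ∀ r : ℝ, 0 < r → ball z₁ r ⊆ W →
      ∀ a ∈ ball z₁ (r/4), ∀ b ∈ ball z₁ (r/4),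
      ‖G n a - G n b‖ ≤ 8 * Rr c / r * ‖a - b‖ := by
    intro n hn z₁ r hr hsub
    apply lipschitz_of_bounded hr
    · exact fun w hw => (hGd n hn w (hsub hw)).differentiableWithinAt
    · exact fun w hw => hGb n hn w (hsub hw)
  have hunif : ∀ z₁ ∈ W, ∀ r : ℝ, 0 < r → ball z₁ r ⊆ W →
      ∀ ε > 0, ∀ᶠ n in (𝒰 : Filter ℕ), ∀ w ∈ closedBall z₁ (r/8),
        dist (g w) (G n w) < ε := by
    intro z₁ hz₁ r hr hsub ε hε
    set Λ : ℝ := 8 * Rr c / r with hΛ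
    have hΛ0 : 0 ≤ Λ := by
      rw [hΛ]
      exact div_nonneg (by linarith) hr.le
    have hball8 : closedBall z₁ (r/8) ⊆ ball z₁ (r/4) := by
      intro p hp
      rw [mem_closedBall] at hp
      rw [mem_ball]
      linarith
    have hball8W : closedBall z₁ (r/8) ⊆ W :=
      subset_trans hball8 (subset_trans (ball_subset_ball (by linarith)) hsub)
    have hgLip : ∀ a ∈ closedBall z₁ (r/8), ∀ b ∈ closedBall z₁ (r/8),
        ‖g a - g b‖ ≤ Λ * ‖a - b‖ := by
      intro a ha b hb
      have htend : Tendsto (fun n => ‖G n a - G n b‖) (𝒰 : Filter ℕ)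
          (nhds ‖g a - g b‖) :=
        ((hgtendsto a (hball8W ha)).sub (hgtendsto b (hball8W hb))).norm
      apply le_of_tendsto htend
      filter_upwards [hE₀] with n hn
      exact hLip n hn z₁ r hr hsub a (hball8 ha) b (hball8 hb)
    set δ : ℝ := ε / (3 * (Λ + 1)) with hδ
    have hδ0 : 0 < δ := by
      rw [hδ]
      exact div_pos hε (by linarith)
    obtain ⟨net, hnetC, hnetcov⟩ := (isCompact_closedBall z₁ (r/8)).elim_nhds_subcover
      (fun w => ball w δ) (fun w _ => ball_mem_nhds w hδ0)
    have hnetev : ∀ i ∈ net, {n : ℕ | dist (g i) (G n i) < ε/3} ∈ (𝒰 : Filter ℕ) := by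
      intro i hi
      have h4 := Metric.tendsto_nhds.mp (hgtendsto i (hball8W (hnetC i hi))) (ε/3)
        (by positivity)
      apply Filter.mem_of_superset h4
      intro n hn
      rw [Set.mem_setOf_eq, dist_comm]
      exact hn
    have hinter : (⋂ i ∈ net, {n : ℕ | dist (g i) (G n i) < ε/3}) ∈ (𝒰 : Filter ℕ) :=
      (Filter.biInter_finset_mem net).mpr hnetev
    filter_upwards [hinter, hE₀] with n hn1 hn2
    intro w hw
    have h5 := hnetcov hw
    rw [Set.mem_iUnion₂] at h5
    obtain ⟨i, hit, hwi⟩ := h5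
    have hiC : i ∈ closedBall z₁ (r/8) := hnetC i hit
    have h1 : dist (g w) (g i) ≤ Λ * ‖w - i‖ := by
      rw [dist_eq_norm]
      exact hgLip w hw i hiC
    have h2 : dist (g i) (G n i) < ε/3 := by
      rw [Set.mem_iInter₂] at hn1
      exact hn1 i hit
    have h3 : dist (G n i) (G n w) ≤ Λ * ‖i - w‖ := by
      rw [dist_eq_norm]
      exact hLip n hn2 z₁ r hr hsub i (hball8 hiC) w (hball8 hw)
    have hwi' : ‖w - i‖ < δ := by rw [mem_ball, dist_eq_norm] at hwi; exact hwi
    have hwi'' : ‖i - w‖ < δ := by rw [norm_sub_rev]; exact hwi'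
    have hΛδ : Λ * δ ≤ ε/3 := by
      rw [hδ, mul_div_assoc']
      rw [div_le_div_iff₀ (by linarith) (by norm_num)]
      nlinarith
    have hb1 : dist (g w) (g i) ≤ Λ * δ :=
      le_trans h1 (mul_le_mul_of_nonneg_left hwi'.le hΛ0)
    have hb3 : dist (G n i) (G n w) ≤ Λ * δ :=
      le_trans h3 (mul_le_mul_of_nonneg_left hwi''.le hΛ0)
    have htri := dist_triangle4 (g w) (g i) (G n i) (G n w)
    linarith
  have hgdiff : ∀ w ∈ W, DifferentiableAt ℂ g w := by
    intro w hw
    obtain ⟨r, hr, hsub⟩ := Metric.isOpen_iff.mp hWopen w hw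
    have huc : TendstoUniformlyOn (fun n w => G n w) g (𝒰 : Filter ℕ)
        (closedBall w (r/8)) := by
      rw [Metric.tendstoUniformlyOn_iff]
      intro ε hε
      exact hunif w hw r hr hsub ε hε
    have hloc : TendstoLocallyUniformlyOn (fun n w => G n w) g (𝒰 : Filter ℕ)
        (ball w (r/8)) :=
      (huc.tendstoLocallyUniformlyOn).mono ball_subset_closedBall
    have hdiffOn : DifferentiableOn ℂ g (ball w (r/8)) := by
      apply hloc.differentiableOn ?_ isOpen_ball
      filter_upwards [hE₀] with n hn
      intro p hp
      have hpW : p ∈ W := hsub (ball_subset_ball (by linarith) hp)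
      exact (hGd n hn p hpW).differentiableWithinAt
    exact hdiffOn.differentiableAt (ball_mem_nhds w (by positivity))
  obtain ⟨ub, hubK, hubT⟩ := ultra_lim_mem 𝒰 hKcpt (Filter.Eventually.of_forall hun)
  obtain ⟨vb, hvbK, hvbT⟩ := ultra_lim_mem 𝒰 hKcpt (Filter.Eventually.of_forall hvn)
  have hlimW : ∀ (w : ℕ → ℂ) (wb : ℂ), wb ∈ KK c →
      (∀ᶠ n in (𝒰 : Filter ℕ), w n ∈ W ∧ w n ∈ KK c) →
      Tendsto w (𝒰 : Filter ℕ) (nhds wb) → wb ∈ W := by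
    intro w wb hwbK hwW hwT
    have hcl : wb ∈ closure (W ∩ KK c) := by
      apply mem_closure_of_tendsto hwT
      filter_upwards [hwW] with n hn
      exact ⟨hn.1, hn.2⟩
    rw [Metric.mem_closure_iff] at hcl
    obtain ⟨p, hp, hpd⟩ := hcl d₀ hd₀
    obtain ⟨hpW, hpK⟩ := hp
    have h1 : ball p d₀ ⊆ W := hballW p hpK hpW
    apply h1
    rw [mem_ball]
    exact hpd
  have hubW : ub ∈ W := by
    apply hlimW u ub hubK ?_ hubT
    filter_upwards [hE₀] with n hn
    exact ⟨huW n hn, hun n⟩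
  have hvbW : vb ∈ W := by
    apply hlimW v vb hvbK ?_ hvbT
    filter_upwards [hE₀] with n hn
    exact ⟨hvW n hn, hvn n⟩
  -- key limit identity
  have keylim : ∀ (w : ℕ → ℂ) (wb : ℂ), wb ∈ W →
      Tendsto w (𝒰 : Filter ℕ) (nhds wb) →
      Tendsto (fun n => G n (w n)) (𝒰 : Filter ℕ) (nhds (g wb)) := by
    intro w wb hwbW hwT
    rw [Metric.tendsto_nhds]
    intro ε hε
    obtain ⟨rb, hrb, hrbW⟩ := Metric.isOpen_iff.mp hWopen wb hwbW
    set Λ : ℝ := 8 * Rr c / rb with hΛ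
    have hΛ0 : 0 ≤ Λ := div_nonneg (by linarith) hrb.le
    have hA1 := Metric.tendsto_nhds.mp hwT (min (rb/8) (ε/(2*(Λ+1))))
      (lt_min (by linarith) (div_pos hε (by linarith)))
    have hA2 := Metric.tendsto_nhds.mp (hgtendsto wb hwbW) (ε/2) (by positivity)
    filter_upwards [hA1, hA2, hE₀] with n h1 h2 h3
    have hwnball : w n ∈ ball wb (rb/4) := by
      rw [mem_ball]
      have := lt_of_lt_of_le h1 (min_le_left _ _)
      linarith
    have hwbball : wb ∈ ball wb (rb/4) := mem_ball_self (by linarith)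
    have hd1 : ‖G n (w n) - G n wb‖ ≤ Λ * ‖w n - wb‖ :=
      hLip n h3 wb rb hrb hrbW _ hwnball _ hwbball
    have hd1' : dist (G n (w n)) (G n wb) ≤ Λ * dist (w n) wb := by
      rw [dist_eq_norm, dist_eq_norm]
      exact hd1
    have hmin2 : dist (w n) wb < ε/(2*(Λ+1)) := lt_of_lt_of_le h1 (min_le_right _ _)
    have hhalf : Λ * dist (w n) wb ≤ ε/2 := by
      have h0 : (0:ℝ) ≤ dist (w n) wb := dist_nonneg
      have hcalc : Λ * dist (w n) wb ≤ Λ * (ε/(2*(Λ+1))) :=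
        mul_le_mul_of_nonneg_left hmin2.le hΛ0
      have : Λ * (ε/(2*(Λ+1))) ≤ ε/2 := by
        rw [mul_div_assoc']
        rw [div_le_div_iff₀ (by linarith) (by norm_num)]
        nlinarith
      linarith
    have htri := dist_triangle (G n (w n)) (G n wb) (g wb)
    have : dist (G n wb) (g wb) < ε/2 := h2
    calc dist (G n (w n)) (g wb) ≤ dist (G n (w n)) (G n wb) + dist (G n wb) (g wb) := htri
    _ < ε/2 + ε/2 := add_lt_add_of_le_of_lt (le_trans hd1' hhalf) this
    _ = ε := by ring
  have hgub : g ub = x := by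
    have h1 : Tendsto (fun n => G n (u n)) (𝒰 : Filter ℕ) (nhds (g ub)) :=
      keylim u ub hubW hubT
    have h2 : (fun n => G n (u n)) = fun _ => x := funext hGx
    rw [h2] at h1
    exact (tendsto_nhds_unique h1 tendsto_const_nhds)
  have hgvb : g vb = y := by
    have h1 : Tendsto (fun n => G n (v n)) (𝒰 : Filter ℕ) (nhds (g vb)) :=
      keylim v vb hvbW hvbT
    have h2 : (fun n => G n (v n)) = fun _ => y := funext hGyv
    rw [h2] at h1
    exact (tendsto_nhds_unique h1 tendsto_const_nhds)
  have hganalW : AnalyticOnNhd ℂ g W := by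
    intro w hw
    obtain ⟨r, hr, hsub⟩ := Metric.isOpen_iff.mp hWopen w hw
    have hdOn : DifferentiableOn ℂ g (ball w r) :=
      fun p hp => (hgdiff p (hsub hp)).differentiableWithinAt
    exact (hdOn.analyticOnNhd isOpen_ball) w (mem_ball_self hr)
  rcases (hganalW ub hubW).eventually_constant_or_nhds_le_map_nhds with hconst | hopen
  · exfalso
    have hEq : EqOn g (fun _ => g ub) W :=
      hganalW.eqOn_of_preconnected_of_eventuallyEq analyticOnNhd_const hWconn hubW
        (by filter_upwards [hconst] with z hz; exact hz)
    have h6 := hEq hvbW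
    simp only at h6
    rw [hgvb, hgub] at h6
    exact hxy h6.symm
  obtain ⟨ru, hru, hruW⟩ := Metric.isOpen_iff.mp hWopen ub hubW
  set s₀ : ℝ := ru/32 with hs₀
  have hs₀pos : 0 < s₀ := by rw [hs₀]; linarith
  have himgnhds : g '' ball ub s₀ ∈ nhds x := by
    rw [← hgub]
    apply hopen
    exact Filter.image_mem_map (ball_mem_nhds ub hs₀pos)
  obtain ⟨ρ₃, hρ₃, hball3⟩ := Metric.mem_nhds_iff.mp himgnhds
  refine ⟨ρ₃, hρ₃, ?_⟩
  intro q' hq'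
  obtain ⟨u', hu's, hgu'⟩ := hball3 hq'
  have hu'W : u' ∈ W := hruW (ball_subset_ball (by rw [hs₀]; linarith) hu's)
  have hne2 : ∀ᶠ z in nhdsWithin u' {u'}ᶜ, g z ≠ q' := by
    rcases (hganalW u' hu'W).eventually_eq_or_eventually_ne
      (analyticAt_const (v := q')) with heq | hne2
    · exfalso
      have hEq : EqOn g (fun _ => q') W :=
        hganalW.eqOn_of_preconnected_of_eventuallyEq analyticOnNhd_const hWconn hu'W heq
      have e1 := hEq hubW
      have e2 := hEq hvbW
      simp only at e1 e2
      rw [hgub] at e1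
      rw [hgvb] at e2
      exact hxy (e1.trans e2.symm)
    · exact hne2
  obtain ⟨t₁, ht₁, hball1⟩ := Metric.mem_nhdsWithin_iff.mp hne2
  set tt : ℝ := min (t₁/2) (ru/32) with htt
  have htt0 : 0 < tt := lt_min (by linarith) (by linarith)
  have hsphere : ∀ z ∈ sphere u' tt, g z ≠ q' := by
    intro z hz
    apply hball1
    rw [mem_sphere] at hz
    constructor
    · rw [mem_ball, hz]
      calc tt ≤ t₁/2 := min_le_left _ _
      _ < t₁ := by linarith
    · rw [Set.mem_compl_iff, Set.mem_singleton_iff]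
      intro hEq
      rw [hEq] at hz
      simp at hz
      linarith [htt0, hz]
  have hcb8 : closedBall u' tt ⊆ closedBall ub (ru/8) := by
    intro z hz
    rw [mem_closedBall] at hz ⊢
    have h7 : dist z ub ≤ dist z u' + dist u' ub := dist_triangle _ _ _
    have h8 : dist u' ub < s₀ := by rw [← mem_ball]; exact hu's
    have h9 : tt ≤ ru/32 := min_le_right _ _
    rw [hs₀] at h8
    linarith
  have hcbW : closedBall u' tt ⊆ W := by
    apply subset_trans hcb8
    apply subset_trans ?_ hruW
    intro z hz
    rw [mem_closedBall] at hz
    rw [mem_ball]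
    linarith
  have hsphne : (sphere u' tt).Nonempty := NormedSpace.sphere_nonempty.mpr htt0.le
  have hgcont : ContinuousOn (fun z => ‖g z - q'‖) (sphere u' tt) := by
    intro z hz
    have hzW : z ∈ W := hcbW (sphere_subset_closedBall hz)
    exact (((hgdiff z hzW).continuousAt.continuousWithinAt).sub
      continuousWithinAt_const).norm
  obtain ⟨zmin, hzmin, hzminOn⟩ := (isCompact_sphere u' tt).exists_isMinOn hsphne hgcont
  set μ : ℝ := ‖g zmin - q'‖ with hμ
  have hμ0 : 0 < μ := norm_pos_iff.mpr (sub_ne_zero.mpr (hsphere zmin hzmin))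
  have hev := hunif ub hubW ru hru hruW (μ/3) (by positivity)
  apply mem_KK_of_frequently
  intro N
  have hsetN : {n : ℕ | N ≤ n} ∈ (𝒰 : Filter ℕ) := hatTop (Filter.mem_atTop N)
  have hEVmem : (E₀ ∩ {n : ℕ | N ≤ n} ∩
      {n : ℕ | ∀ w ∈ closedBall ub (ru/8), dist (g w) (G n w) < μ/3}) ∈ (𝒰 : Filter ℕ) :=
    Filter.inter_mem (Filter.inter_mem hE₀ hsetN) hev
  obtain ⟨n, hn⟩ := Filter.nonempty_of_mem hEVmem
  obtain ⟨⟨hn0, hnN⟩, hnev⟩ := hn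
  refine ⟨m + n, le_trans hnN (Nat.le_add_left n m), ?_⟩
  by_cases hno : ∀ w ∈ closedBall u' tt, G n w ≠ q'
  · exfalso
    set F : ℂ → ℂ := fun z => (G n z - q')⁻¹ with hF
    have hdcc : DiffContOnCl ℂ F (ball u' tt) := by
      constructor
      · intro z hz
        have hzW : z ∈ W := hcbW (ball_subset_closedBall hz)
        exact (((hGd n hn0 z hzW).sub_const q').inv
          (sub_ne_zero.mpr (hno z (ball_subset_closedBall hz)))).differentiableWithinAt
      · rw [closure_ball u' htt0.ne']
        intro z hz
        have hzW : z ∈ W := hcbW hz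
        exact (((hGd n hn0 z hzW).continuousAt.continuousWithinAt).sub
          continuousWithinAt_const).inv₀ (sub_ne_zero.mpr (hno z hz))
    have hfrb : ∀ w ∈ frontier (ball u' tt), ‖F w‖ ≤ 3/(2*μ) := by
      intro w hw
      rw [frontier_ball u' htt0.ne'] at hw
      have hwcb : w ∈ closedBall u' tt := sphere_subset_closedBall hw
      have h5 : dist (g w) (G n w) < μ/3 := hnev w (hcb8 hwcb)
      have h6 : μ ≤ ‖g w - q'‖ := hzminOn hw
      have h7 : 2*μ/3 ≤ ‖G n w - q'‖ := by
        have h7a : ‖g w - q'‖ ≤ ‖g w - G n w‖ + ‖G n w - q'‖ := by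
          calc ‖g w - q'‖ = ‖(g w - G n w) + (G n w - q')‖ := by ring_nf
          _ ≤ _ := norm_add_le _ _
        have h7b : ‖g w - G n w‖ < μ/3 := by rw [← dist_eq_norm]; exact h5
        linarith
      have h8 : (0:ℝ) < ‖G n w - q'‖ := by linarith
      rw [hF]
      simp only
      rw [norm_inv, inv_eq_one_div]
      rw [div_le_div_iff₀ h8 (by positivity)]
      linarith
    have hctr := Complex.norm_le_of_forall_mem_frontier_norm_le isBounded_ball hdcc hfrb
      (subset_closure (mem_ball_self htt0))
    have h10 : ‖G n u' - q'‖ < μ/3 := by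
      have h10a := hnev u' (hcb8 (mem_closedBall_self htt0.le))
      rw [← hgu']
      rw [dist_comm, dist_eq_norm] at h10a
      exact h10a
    have h11 : (0:ℝ) < ‖G n u' - q'‖ :=
      norm_pos_iff.mpr (sub_ne_zero.mpr (hno u' (mem_closedBall_self htt0.le)))
    rw [hF] at hctr
    simp only at hctr
    rw [norm_inv, inv_eq_one_div, div_le_div_iff₀ h11 (by positivity)] at hctr
    linarith
  · push_neg at hno
    obtain ⟨wz, hwz, hwzq⟩ := hno
    have hq'V : q' ∈ VV c (m + n) := by
      rw [← hwzq]
      exact hGV n hn0 wz (hcbW hwz)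
    exact hq'V

-- ===== Module 8 : conclusion =====

lemma exists_m (h0 : ∃ n₀ : ℕ, Rr c ≤ ‖(fc c)^[n₀] 0‖) :
    ∃ m : ℕ, ∀ j, m ≤ j → Rr c + 1 ≤ ‖(fc c)^[j] c‖ := by
  obtain ⟨n₀, hn₀⟩ := h0
  refine ⟨n₀, fun j hj => ?_⟩
  have h1 : (fc c)^[j] c = (fc c)^[j+1] 0 := by
    rw [Function.iterate_succ_apply]
    norm_num [fc]
  rw [h1]
  set i : ℕ := j - n₀ + 1 with hi
  have hisum : j + 1 = i + n₀ := by omega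
  have hi1 : 1 ≤ i := by omega
  rw [hisum, Function.iterate_add_apply]
  have h2 := iter_grow hn₀ i
  have h3 : (1:ℝ) ≤ (i:ℝ) := by exact_mod_cast hi1
  linarith

lemma totally_disconnected_of_escape
    (h : ¬ Bornology.IsBounded (Set.range fun n : ℕ => (fc c)^[n] 0)) :
    IsTotallyDisconnected (KK c) := by
  have h0 : (0:ℂ) ∉ KK c := h
  have hmex : ∃ m : ℕ, ∀ j, m ≤ j → Rr c + 1 ≤ ‖(fc c)^[j] c‖ := by
    apply exists_m
    by_contra hno
    push_neg at hno
    exact h0 (mem_KK_iff.mpr hno)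
  obtain ⟨m, hm⟩ := hmex
  intro t htsub htconn a ha b hb
  by_contra hab
  -- Stage 1 : a is an interior point of K
  obtain ⟨ρ₁, hρ₁, hball₁⟩ := main_ball hm htconn htsub ha hb hab
  set Ω := connectedComponentIn (interior (KK c)) a with hΩ
  have haint : a ∈ interior (KK c) :=
    mem_interior.mpr ⟨ball a ρ₁, hball₁, isOpen_ball, mem_ball_self hρ₁⟩
  have hΩopen : IsOpen Ω := isOpen_interior.connectedComponentIn
  have haΩ : a ∈ Ω := mem_connectedComponentIn haint
  have hΩK : Ω ⊆ KK c := subset_trans (connectedComponentIn_subset _ _) interior_subset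
  -- the frontier of Ω is nonempty
  have hfr : (frontier Ω).Nonempty := by
    by_contra hfe
    rw [Set.not_nonempty_iff_eq_empty] at hfe
    have hclopen : IsClopen Ω := isClopen_iff_frontier_eq_empty.mpr hfe
    rcases isClopen_iff.mp hclopen with hemp | huniv
    · rw [hemp] at haΩ
      exact haΩ
    · have : ((Rr c : ℂ)) ∈ Ω := by rw [huniv]; trivial
      have h2 : ‖((Rr c : ℂ))‖ < Rr c := by
        have h3 := VV_subset_ball 0 (KK_subset_VV (hΩK this) 0)
        rw [mem_ball, dist_zero_right] at h3
        exact h3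
      rw [Complex.norm_real, Real.norm_eq_abs, abs_of_pos Rr_pos] at h2
      exact lt_irrefl _ h2
  obtain ⟨bb, hbb⟩ := hfr
  have hbb2 : bb ∈ closure Ω \ Ω := by rw [← hΩopen.frontier_eq]; exact hbb
  have hbbcl : bb ∈ closure Ω := hbb2.1
  have hbbnot : bb ∉ Ω := hbb2.2
  have hclconn : IsPreconnected (closure Ω) :=
    (isPreconnected_connectedComponentIn).closure
  have hclK : closure Ω ⊆ KK c := closure_minimal hΩK isClosed_KK
  have hbba : bb ≠ a := fun hEq => hbbnot (hEq ▸ haΩ)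
  -- Stage 2 : bb is an interior point of K, contradiction
  obtain ⟨ρ₂, hρ₂, hball₂⟩ := main_ball hm hclconn hclK hbbcl (subset_closure haΩ) hbba
  have hbint : ball bb ρ₂ ⊆ interior (KK c) := interior_maximal hball₂ isOpen_ball
  obtain ⟨p, hpΩ, hpb⟩ : ∃ p ∈ Ω, p ∈ ball bb ρ₂ := by
    rw [Metric.mem_closure_iff] at hbbcl
    obtain ⟨p, hp1, hp2⟩ := hbbcl ρ₂ hρ₂
    exact ⟨p, hp1, by rw [mem_ball, dist_comm]; exact hp2⟩
  have hunion : IsPreconnected (Ω ∪ ball bb ρ₂) :=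
    IsPreconnected.union p hpΩ hpb isPreconnected_connectedComponentIn
      (convex_ball bb ρ₂).isPreconnected
  have hsubint : Ω ∪ ball bb ρ₂ ⊆ interior (KK c) :=
    Set.union_subset (connectedComponentIn_subset _ _) hbint
  have hsubΩ : Ω ∪ ball bb ρ₂ ⊆ Ω := by
    have := hunion.subset_connectedComponentIn (Or.inl haΩ) hsubint
    rwa [← hΩ] at this
  exact hbbnot (hsubΩ (Or.inr (mem_ball_self hρ₂)))

end

end Stmt18

theorem stmt_18 (c : ℂ)
    (h : ¬ Bornology.IsBounded
      (Set.range fun n : ℕ => (fun w : ℂ => w ^ 2 + c)^[n] 0)) :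
    IsTotallyDisconnected {z : ℂ | Bornology.IsBounded
      (Set.range fun n : ℕ => (fun w : ℂ => w ^ 2 + c)^[n] z)} :=
  Stmt18.totally_disconnected_of_escape h
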